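/- Let S be a d-simplex in Euclidean d-space (d ≥ 2). If any two of the centroid, the circumcenter, and the Fermat-Torricelli point of S coincide, then all three coincide. -/

import Mathlib

/-
Common geometric notions for simplices in Euclidean d-space, following
Edmonds–Hajja–Martini, "Coincidences of simplex centers and related facial
structures".  A d-simplex is given by its d+1 affinely independent vertices
`A : Fin (d+1) → EuclideanSpace ℝ (Fin d)`.
-/

noncomputable section

abbrev Pt (d : ℕ) : Type := EuclideanSpace ℝ (Fin d)

variable {d : ℕ}

/-- The centroid of the simplex with vertices `A`: the average of the vertices. -/
def ctr (A : Fin (d+1) → Pt d) : Pt d := Finset.centroid ℝ Finset.univ A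

/-- `C` is a circumcenter of the simplex with vertices `A`:
it is equidistant from all the vertices. -/
def IsCircumcenter (A : Fin (d+1) → Pt d) (C : Pt d) : Prop :=
  ∃ r : ℝ, ∀ i, dist C (A i) = r

/-- The affine span (hyperplane) of the facet opposite to vertex `j`. -/
def facetSpan (A : Fin (d+1) → Pt d) (j : Fin (d+1)) : Set (Pt d) :=
  (affineSpan ℝ (A '' {i | i ≠ j}) : Set (Pt d))

/-- `I` is the incenter of the simplex with vertices `A`: an interior point
equidistant from the affine hyperplanes spanned by the facets. -/
def IsIncenter (A : Fin (d+1) → Pt d) (I : Pt d) : Prop :=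
  I ∈ interior (convexHull ℝ (Set.range A)) ∧
    ∃ r : ℝ, ∀ j, Metric.infDist I (facetSpan A j) = r

/-- `F` is a Fermat-Torricelli point of the simplex with vertices `A`:
it minimizes the sum of the distances to the vertices. -/
def IsFermatPoint (A : Fin (d+1) → Pt d) (F : Pt d) : Prop :=
  ∀ Q : Pt d, ∑ i, dist F (A i) ≤ ∑ i, dist Q (A i)

/-- The altitude of the simplex at vertex `j`: the distance from `A j` to the
affine span of the opposite facet. -/
def altitude (A : Fin (d+1) → Pt d) (j : Fin (d+1)) : ℝ :=
  Metric.infDist (A j) (facetSpan A j)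

/-- Equiareal: all facets have the same `(d-1)`-dimensional volume; equivalently
(since `d · vol S = facet volume · altitude`), all altitudes are equal. -/
def Equiareal (A : Fin (d+1) → Pt d) : Prop :=
  ∀ j k, altitude A j = altitude A k

/-- `r` is the circumradius of the facet opposite `j`: some point of the affine
span of the facet is at distance `r` from all its vertices. -/
def IsFacetCircumradius (A : Fin (d+1) → Pt d) (j : Fin (d+1)) (r : ℝ) : Prop :=
  ∃ C ∈ affineSpan ℝ (A '' {i | i ≠ j}), ∀ i, i ≠ j → dist C (A i) = r

/-- Equiradial: all facets have the same circumradius. -/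
def Equiradial (A : Fin (d+1) → Pt d) : Prop :=
  ∃ r : ℝ, ∀ j, IsFacetCircumradius A j r

/-- Equifacetal: any two facets are congruent, i.e. there is an isometry of the
ambient space carrying the vertex set of one facet onto that of the other. -/
def Equifacetal (A : Fin (d+1) → Pt d) : Prop :=
  ∀ j k, ∃ f : Pt d ≃ᵢ Pt d, f '' (A '' {i | i ≠ j}) = A '' {i | i ≠ k}

/-- Regular: all edges have equal length. -/
def Regular (A : Fin (d+1) → Pt d) : Prop :=
  ∀ i j k l, i ≠ j → k ≠ l → dist (A i) (A j) = dist (A k) (A l)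

/-- Theorem 3.1. Let `S` be a `d`-simplex (`d ≥ 2`) with
circumcenter `C` and Fermat-Torricelli point `F`.  If any two of the centroid,
the circumcenter and the Fermat-Torricelli point coincide, then all three
coincide. -/
lemma my_norm_le_aux {E : Type*} [NormedAddCommGroup E] (y : E) {r : ℝ} (hr : 0 < r) :
    ‖y‖ ≤ (‖y‖^2 + r^2) / (2*r) := by
  rw [le_div_iff₀ (by positivity)]
  nlinarith [sq_nonneg (‖y‖ - r), norm_nonneg y]

lemma ctr_eq_smul_sum (A : Fin (d+1) → Pt d) :
    ctr A = ((d:ℝ)+1)⁻¹ • ∑ i, A i := by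
  rw [ctr, Finset.centroid_def,
    Finset.affineCombination_eq_linear_combination _ _ _
      (Finset.sum_centroidWeights_eq_one_of_card_ne_zero ℝ _ (by simp))]
  have hwc : ∀ i : Fin (d+1), Finset.centroidWeights ℝ Finset.univ i = ((d:ℝ)+1)⁻¹ := by
    intro i
    simp [Finset.centroidWeights, Finset.card_univ]
  simp_rw [hwc]
  rw [← Finset.smul_sum]

lemma sum_sub_ctr (A : Fin (d+1) → Pt d) : ∑ i, (A i - ctr A) = 0 := by
  rw [Finset.sum_sub_distrib, Finset.sum_const, Finset.card_univ, Fintype.card_fin, sub_eq_zero,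
    ← Nat.cast_smul_eq_nsmul ℝ, ctr_eq_smul_sum, smul_smul]
  have : ((d:ℝ)+1) ≠ 0 := by positivity
  rw [show ((d+1 : ℕ) : ℝ) = (d:ℝ)+1 by push_cast; ring, mul_inv_cancel₀ this, one_smul]

lemma ctr_eq_of_sum (A : Fin (d+1) → Pt d) (G : Pt d) (h : ∑ i, (A i - G) = 0) :
    ctr A = G := by
  have h1 : ∑ i, A i = ((d:ℝ)+1) • G := by
    rw [Finset.sum_sub_distrib, Finset.sum_const, Finset.card_univ, Fintype.card_fin,
      sub_eq_zero] at h
    rw [h, ← Nat.cast_smul_eq_nsmul ℝ]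
    push_cast; ring_nf
  have : ((d:ℝ)+1) ≠ 0 := by positivity
  rw [ctr_eq_smul_sum, h1, smul_smul, inv_mul_cancel₀ this, one_smul]

lemma ctr_ne (hd : 1 ≤ d) (A : Fin (d+1) → Pt d) (hA : AffineIndependent ℝ A) (j : Fin (d+1)) :
    ctr A ≠ A j := by
  intro hEq
  have hd1 : ((d:ℝ)+1) ≠ 0 := by positivity
  set w : Fin (d+1) → ℝ := fun i => ((d:ℝ)+1)⁻¹ - (if i = j then 1 else 0) with hw
  have hw0 : ∑ i, w i = 0 := by
    simp [hw, Finset.sum_sub_distrib, Finset.card_univ]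
    push_cast
    field_simp
    ring
  have hws : ∑ i, w i • A i = 0 := by
    have : ∑ i, w i • A i = (((d:ℝ)+1)⁻¹ • ∑ i, A i) - A j := by
      simp [hw, sub_smul, Finset.sum_sub_distrib, ← Finset.smul_sum, ite_smul]
    rw [this, ← ctr_eq_smul_sum, hEq, sub_self]
  have hj' : ∃ i : Fin (d+1), i ≠ j := by
    rcases Decidable.em (j = ⟨0, by omega⟩) with h | h
    · exact ⟨⟨1, by omega⟩, by simp [h, Fin.ext_iff]⟩
    · exact ⟨⟨0, by omega⟩, fun hh => h hh.symm⟩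
  obtain ⟨i, hij⟩ := hj'
  have := affineIndependent_iff.1 hA Finset.univ w hw0 hws i (Finset.mem_univ i)
  simp [hw, hij] at this
  exact hd1 this
lemma fermat_grad_zero {n : ℕ} (A : Fin n → Pt d) (F : Pt d)
    (hF : ∀ Q : Pt d, ∑ i, dist F (A i) ≤ ∑ i, dist Q (A i))
    (hne : ∀ i, F ≠ A i) :
    ∑ i, (dist F (A i))⁻¹ • (A i - F) = 0 := by
  by_contra hg
  have hn : 0 < n := by
    rcases Nat.eq_zero_or_pos n with h | h
    · subst h; simp at hg
    · exact h
  set g : Pt d := ∑ i, (dist F (A i))⁻¹ • (A i - F) with hgdef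
  have hgn : (0:ℝ) < ‖g‖^2 := by
    have := norm_pos_iff.2 hg
    positivity
  have hr : ∀ i, 0 < dist F (A i) := fun i => dist_pos.2 (hne i)
  set K : ℝ := ∑ i, (2 * dist F (A i))⁻¹ with hK
  have hKpos : 0 < K := by
    apply Finset.sum_pos
    · intro i _
      have := hr i
      positivity
    · exact ⟨⟨0, hn⟩, Finset.mem_univ _⟩
  set t : ℝ := (2*K)⁻¹ with ht
  have htpos : 0 < t := by positivity
  have key : ∀ i, dist (F + t • g) (A i) ≤
      dist F (A i) - t * ((dist F (A i))⁻¹ * (inner ℝ (A i - F) g : ℝ))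
        + t^2 * ‖g‖^2 * (2 * dist F (A i))⁻¹ := by
    intro i
    have hri := hr i
    have h1 : dist (F + t • g) (A i) = ‖(A i - F) - t • g‖ := by
      rw [dist_eq_norm, ← norm_neg]
      congr 1
      abel
    have h2 : ‖(A i - F) - t • g‖^2 =
        dist F (A i)^2 - 2 * t * (inner ℝ (A i - F) g : ℝ) + t^2 * ‖g‖^2 := by
      rw [norm_sub_sq_real, real_inner_smul_right, norm_smul]
      rw [show ‖A i - F‖ = dist F (A i) by rw [dist_eq_norm, ← norm_neg]; congr 1; abel]
      simp [mul_pow, abs_of_pos htpos]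
      ring
    have h3 := my_norm_le_aux ((A i - F) - t • g) hri
    rw [h2] at h3
    rw [h1]
    refine h3.trans (le_of_eq ?_)
    field_simp
    ring
  have hsum : ∑ i, (dist F (A i))⁻¹ * (inner ℝ (A i - F) g : ℝ) = ‖g‖^2 := by
    have : ∀ i, (dist F (A i))⁻¹ * (inner ℝ (A i - F) g : ℝ)
        = (inner ℝ ((dist F (A i))⁻¹ • (A i - F)) g : ℝ) := by
      intro i; rw [real_inner_smul_left]
    simp_rw [this]
    rw [← sum_inner, ← hgdef, real_inner_self_eq_norm_sq]
  have hle : ∑ i, dist (F + t • g) (A i) ≤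
      ∑ i, dist F (A i) - t * ‖g‖^2 + t^2 * ‖g‖^2 * K := by
    calc ∑ i, dist (F + t • g) (A i)
        ≤ ∑ i, (dist F (A i) - t * ((dist F (A i))⁻¹ * (inner ℝ (A i - F) g : ℝ))
            + t^2 * ‖g‖^2 * (2 * dist F (A i))⁻¹) := Finset.sum_le_sum (fun i _ => key i)
      _ = ∑ i, dist F (A i) - t * ‖g‖^2 + t^2 * ‖g‖^2 * K := by
          rw [Finset.sum_add_distrib, Finset.sum_sub_distrib, ← Finset.mul_sum, hsum,
            ← Finset.mul_sum, ← hK]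
  have hcontra := hF (F + t • g)
  have : (0:ℝ) < t * ‖g‖^2 - t^2 * ‖g‖^2 * K := by
    have htK : t * K < 1 := by
      rw [ht]; rw [inv_mul_lt_iff₀ (by positivity)]; linarith
    have h1 : 0 < t * ‖g‖^2 := mul_pos htpos hgn
    have h2 : 0 < 1 - t*K := by linarith
    nlinarith [mul_pos h1 h2]
  linarith

lemma circum_unique (A : Fin (d+1) → Pt d) (hA : AffineIndependent ℝ A)
    {C C' : Pt d} {r r' : ℝ} (h : ∀ i, dist C (A i) = r) (h' : ∀ i, dist C' (A i) = r') :
    C = C' := by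
  have hspan : affineSpan ℝ (Set.range A) = ⊤ := by
    rw [hA.affineSpan_eq_top_iff_card_eq_finrank_add_one]
    simp [finrank_euclideanSpace_fin]
  let S : Affine.Simplex ℝ (Pt d) d := ⟨A, hA⟩
  have hmem : ∀ p : Pt d, p ∈ affineSpan ℝ (Set.range S.points) := by
    intro p
    show p ∈ affineSpan ℝ (Set.range A)
    rw [hspan]; trivial
  have h1 : C = S.circumcenter :=
    S.eq_circumcenter_of_dist_eq (hmem C) (fun i => by rw [dist_comm]; exact h i)
  have h2 : C' = S.circumcenter :=
    S.eq_circumcenter_of_dist_eq (hmem C') (fun i => by rw [dist_comm]; exact h' i)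
  rw [h1, h2]

lemma not_all_on_line (hd : 2 ≤ d) (A : Fin (d+1) → Pt d) (hA : AffineIndependent ℝ A)
    (P v : Pt d) (h : ∀ i, ∃ t : ℝ, A i = P + t • v) : False := by
  choose t hT using h
  set i0 : Fin (d+1) := ⟨0, by omega⟩
  set i1 : Fin (d+1) := ⟨1, by omega⟩
  set i2 : Fin (d+1) := ⟨2, by omega⟩
  have h01 : i0 ≠ i1 := by simp [i0, i1, Fin.ext_iff]
  have h02 : i0 ≠ i2 := by simp [i0, i2, Fin.ext_iff]
  have h12 : i1 ≠ i2 := by simp [i1, i2, Fin.ext_iff]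
  set s1 : ℝ := t i1 - t i0 with hs1
  set s2 : ℝ := t i2 - t i0 with hs2
  have hdiff : ∀ i j : Fin (d+1), A i - A j = (t i - t j) • v := by
    intro i j; rw [hT i, hT j, sub_smul]; abel
  have hs1ne : s1 ≠ 0 := by
    intro hzero
    apply h01
    apply hA.injective
    have := hdiff i1 i0
    rw [← hs1, hzero, zero_smul, sub_eq_zero] at this
    exact this.symm
  have hs2ne : s2 ≠ 0 := by
    intro hzero
    apply h02
    apply hA.injective
    have := hdiff i2 i0
    rw [← hs2, hzero, zero_smul, sub_eq_zero] at this
    exact this.symm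
  set w : Fin (d+1) → ℝ := fun i =>
    if i = i1 then s2 else if i = i2 then -s1 else if i = i0 then s1 - s2 else 0 with hw
  have hsupp : ∀ i, i ≠ i0 → i ≠ i1 → i ≠ i2 → w i = 0 := by
    intro i hi0 hi1 hi2; simp [hw, hi0, hi1, hi2]
  have hsum3 : ∀ (M : Type) [AddCommGroup M] (f : Fin (d+1) → M),
      (∀ i, i ≠ i0 → i ≠ i1 → i ≠ i2 → f i = 0) →
      ∑ i, f i = f i0 + f i1 + f i2 := by
    intro M _ f hf
    rw [← Finset.sum_subset (Finset.subset_univ {i0, i1, i2})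
      (fun x _ hx => by
        simp only [Finset.mem_insert, Finset.mem_singleton, not_or] at hx
        exact hf x hx.1 hx.2.1 hx.2.2)]
    rw [Finset.sum_insert (by simp [h01, h02]), Finset.sum_insert (by simp [h12]),
      Finset.sum_singleton]
    abel
  have e0 : w i0 = s1 - s2 := by simp [hw, h01, h02]
  have e1 : w i1 = s2 := by simp [hw]
  have e2 : w i2 = -s1 := by simp [hw, h12.symm]
  have hw0 : ∑ i, w i = 0 := by
    rw [hsum3 ℝ w hsupp, e0, e1, e2]
    ring
  have hws : ∑ i, w i • A i = 0 := by
    have hf : ∀ i : Fin (d+1), i ≠ i0 → i ≠ i1 → i ≠ i2 → w i • A i = 0 := by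
      intro i hi0 hi1 hi2; rw [hsupp i hi0 hi1 hi2, zero_smul]
    rw [hsum3 (Pt d) (fun i => w i • A i) hf]
    rw [e0, e1, e2, hT i0, hT i1, hT i2]
    simp only [smul_add, smul_smul]
    rw [hs1, hs2]
    module
  have := affineIndependent_iff.1 hA Finset.univ w hw0 hws i1 (Finset.mem_univ i1)
  rw [e1] at this
  exact hs2ne this

theorem statement3 (d : ℕ) (hd : 2 ≤ d)
    (A : Fin (d+1) → Pt d) (hA : AffineIndependent ℝ A)
    (C F : Pt d) (hC : IsCircumcenter A C) (hF : IsFermatPoint A F)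
    (h2 : ctr A = C ∨ ctr A = F ∨ C = F) :
    ctr A = C ∧ C = F := by
  obtain ⟨r, hCr⟩ := hC
  have hinj := hA.injective
  have hi01 : (⟨0, by omega⟩ : Fin (d+1)) ≠ ⟨1, by omega⟩ := by simp [Fin.ext_iff]
  have hrpos : 0 < r := by
    rcases lt_or_eq_of_le (dist_nonneg.trans_eq (hCr ⟨0, by omega⟩)) with h | h
    · exact h
    · exfalso
      have hz : ∀ i, A i = C := by
        intro i
        have h' := hCr i
        rw [← h] at h'
        exact (dist_eq_zero.1 h').symm
      exact hi01 (hinj ((hz _).trans (hz _).symm))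
  have hCne : ∀ i, C ≠ A i := by
    intro i h
    have h' := hCr i
    rw [← h] at h'
    simp at h'
    exact hrpos.ne h'
  -- Case B : centroid = Fermat point implies centroid = circumcenter
  have caseB : ctr A = F → ctr A = C := by
    intro hGF
    have hne : ∀ i, F ≠ A i := fun i => hGF ▸ ctr_ne (by omega) A hA i
    have hg := fermat_grad_zero A F hF hne
    have hsum0 : ∑ i, (A i - F) = 0 := by
      rw [← hGF]
      exact sum_sub_ctr A
    set lam : ℝ := (∑ i, (dist F (A i))⁻¹) / ((d:ℝ)+1) with hlam
    set w : Fin (d+1) → ℝ := fun i => (dist F (A i))⁻¹ - lam with hwdef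
    have hw0 : ∑ i, w i = 0 := by
      have hd1 : ((d:ℝ)+1) ≠ 0 := by positivity
      simp only [hwdef, Finset.sum_sub_distrib, Finset.sum_const, Finset.card_univ,
        Fintype.card_fin, hlam, nsmul_eq_mul]
      push_cast
      field_simp
      ring
    have hws : ∑ i, w i • A i = 0 := by
      have h1 : ∀ i, w i • A i =
          (dist F (A i))⁻¹ • (A i - F) - lam • (A i - F) + w i • F := by
        intro i
        simp only [hwdef, sub_smul, smul_sub]
        abel
      rw [Finset.sum_congr rfl (fun i _ => h1 i), Finset.sum_add_distrib,
        Finset.sum_sub_distrib, hg, ← Finset.smul_sum, hsum0, smul_zero,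
        ← Finset.sum_smul, hw0, zero_smul]
      simp
    have hwz := affineIndependent_iff.1 hA Finset.univ w hw0 hws
    have hdist : ∀ i, dist F (A i) = lam⁻¹ := by
      intro i
      have h' := hwz i (Finset.mem_univ i)
      have h2 : (dist F (A i))⁻¹ = lam := by
        have := sub_eq_zero.1 h'
        simpa [hwdef] using this
      rw [← h2, inv_inv]
    have := circum_unique A hA hdist hCr
    rw [hGF]
    exact this
  -- Case C : circumcenter = Fermat point implies circumcenter = centroid
  have caseC : C = F → ctr A = C := by
    intro hCF
    have hF' : ∀ Q : Pt d, ∑ i, dist C (A i) ≤ ∑ i, dist Q (A i) := by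
      rw [hCF]; exact hF
    have hg := fermat_grad_zero A C hF' hCne
    have hg' : ∑ i, (A i - C) = 0 := by
      have hcong : ∀ i, (dist C (A i))⁻¹ • (A i - C) = r⁻¹ • (A i - C) := by
        intro i; rw [hCr i]
      rw [Finset.sum_congr rfl (fun i _ => hcong i), ← Finset.smul_sum] at hg
      have hr0 : r⁻¹ ≠ 0 := inv_ne_zero hrpos.ne'
      exact (smul_eq_zero.1 hg).resolve_left hr0
    exact ctr_eq_of_sum A C hg'
  -- Case A : centroid = circumcenter implies circumcenter = Fermat point
  have caseA : ctr A = C → C = F := by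
    intro hGC
    by_contra hCF
    set u : Fin (d+1) → Pt d := fun i => r⁻¹ • (C - A i) with hu
    have hCA : ∀ i, ‖C - A i‖ = r := by
      intro i; rw [← dist_eq_norm]; exact hCr i
    have hun : ∀ i, ‖u i‖ = 1 := by
      intro i
      rw [hu]
      simp only [norm_smul, hCA i, Real.norm_eq_abs, abs_of_pos (inv_pos.2 hrpos)]
      field_simp
    have husum : ∑ i, u i = 0 := by
      have h1 : ∀ i : Fin (d+1), u i = -(r⁻¹ • (A i - C)) := by
        intro i
        rw [hu, ← smul_neg, neg_sub]
      rw [Finset.sum_congr rfl (fun i _ => h1 i), Finset.sum_neg_distrib,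
        ← Finset.smul_sum]
      rw [show ∑ i, (A i - C) = 0 by rw [← hGC]; exact sum_sub_ctr A]
      simp
    set e : Fin (d+1) → ℝ := fun i => dist F (A i) - (inner ℝ (F - A i) (u i) : ℝ) with he
    have he_nonneg : ∀ i, 0 ≤ e i := by
      intro i
      have h1 : (inner ℝ (F - A i) (u i) : ℝ) ≤ ‖F - A i‖ * ‖u i‖ := real_inner_le_norm _ _
      rw [hun i, mul_one] at h1
      rw [he]
      simp only [dist_eq_norm]
      linarith
    have hsum_inner : ∑ i, (inner ℝ (F - A i) (u i) : ℝ) = ((d:ℝ)+1) * r := by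
      have h1 : ∀ i, (inner ℝ (F - A i) (u i) : ℝ)
          = (inner ℝ (F - C) (u i) : ℝ) + (inner ℝ (C - A i) (u i) : ℝ) := by
        intro i
        rw [← inner_add_left]
        congr 1
        abel
      rw [Finset.sum_congr rfl (fun i _ => h1 i), Finset.sum_add_distrib,
        ← inner_sum, husum, inner_zero_right]
      have h2 : ∀ i : Fin (d+1), (inner ℝ (C - A i) (u i) : ℝ) = r := by
        intro i
        rw [hu]
        simp only [real_inner_smul_right, real_inner_self_eq_norm_sq, hCA i]
        field_simp
      rw [Finset.sum_congr rfl (fun i _ => h2 i), Finset.sum_const, Finset.card_univ,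
        Fintype.card_fin, nsmul_eq_mul]
      push_cast
      ring
    have hfF : ∑ i, dist F (A i) ≤ ((d:ℝ)+1) * r := by
      have := hF C
      rw [Finset.sum_congr rfl (fun i _ => hCr i), Finset.sum_const, Finset.card_univ,
        Fintype.card_fin, nsmul_eq_mul] at this
      push_cast at this
      linarith
    have hsum_e : ∑ i, e i = 0 := by
      have hle : ∑ i, e i ≤ 0 := by
        rw [he]
        simp only [Finset.sum_sub_distrib, hsum_inner]
        linarith
      have hge : 0 ≤ ∑ i, e i := Finset.sum_nonneg (fun i _ => he_nonneg i)
      linarith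
    have he0 : ∀ i, e i = 0 := by
      intro i
      have := (Finset.sum_eq_zero_iff_of_nonneg (fun i _ => he_nonneg i)).1 hsum_e i
        (Finset.mem_univ i)
      exact this
    have hline : ∀ i, ∃ s : ℝ, A i = C + s • (F - C) := by
      intro i
      have hEq : (inner ℝ (F - A i) (u i) : ℝ) = ‖F - A i‖ * ‖u i‖ := by
        have := he0 i
        rw [he] at this
        simp only [dist_eq_norm] at this
        rw [hun i, mul_one]
        linarith
      have hsm := inner_eq_norm_mul_iff_real.1 hEq
      rw [hun i, one_smul] at hsm
      -- hsm : F - A i = ‖F - A i‖ • u i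
      set c : ℝ := ‖F - A i‖ * r⁻¹ with hc
      have heq2 : F - A i = c • (C - A i) := by
        rw [hsm, hu, smul_smul]
      have hc1 : c ≠ 1 := by
        intro h1
        rw [h1, one_smul] at heq2
        exact hCF (sub_left_inj.1 heq2).symm
      have hFC' : F - C = (c - 1) • (C - A i) := by
        rw [sub_smul, one_smul, ← heq2]
        abel
      refine ⟨-(c-1)⁻¹, ?_⟩
      rw [hFC', smul_smul]
      have hmul : -(c-1)⁻¹ * (c-1) = -1 := by
        field_simp [sub_ne_zero.2 hc1]
      rw [hmul]
      module
    exact absurd (not_all_on_line hd A hA C (F - C) hline) (fun h => h)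
  rcases h2 with h | h | h
  · exact ⟨h, caseA h⟩
  · have h1 : ctr A = C := caseB h
    exact ⟨h1, h1.symm.trans h⟩
  · exact ⟨caseC h, h⟩
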